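/- Let N ≥ 2 and let X_1, …, X_N ∈ ℝ^{n×R} all have full column rank R. Then the order-N tensor T = Σ_{r=1}^R a_{r1} ∘ ⋯ ∘ a_{rN} (where a_{ri} is the r-th column of X_i) has tensor rank exactly R: it cannot be written as a sum of fewer than R rank-one (outer product) tensors. -/

import Mathlib

open scoped Matrix

lemma exists_w {n R : ℕ} (v : Fin R → Fin n → ℝ) (hv : ∀ r, v r ≠ 0) :
    ∃ w : Fin n → ℝ, ∀ r, ∑ x, v r x * w x ≠ 0 := by
  set φ : Fin R → ((Fin n → ℝ) →ₗ[ℝ] ℝ) := fun r =>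
    { toFun := fun w => ∑ x, v r x * w x
      map_add' := by intro a b; simp [mul_add, Finset.sum_add_distrib]
      map_smul' := by intro c a; simp [Finset.mul_sum, mul_left_comm] }
  have hker : ∀ r, LinearMap.ker (φ r) ≠ ⊤ := by
    intro r h
    apply hv r
    funext x
    have : φ r (Pi.single x 1) = 0 := by
      have : Pi.single x (1:ℝ) ∈ LinearMap.ker (φ r) := h ▸ Submodule.mem_top
      simpa using this
    simpa [φ, Pi.single_apply, mul_comm] using this
  by_contra h
  push_neg at h
  have hcov : ⋃ r, ((LinearMap.ker (φ r) : Submodule ℝ (Fin n → ℝ)) : Set (Fin n → ℝ))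
      = Set.univ := by
    ext w
    simp only [Set.mem_iUnion, Set.mem_univ, iff_true, SetLike.mem_coe, LinearMap.mem_ker]
    obtain ⟨r, hr⟩ := h w
    exact ⟨r, hr⟩
  obtain ⟨r, hr⟩ := Subspace.exists_eq_top_of_iUnion_eq_univ hcov
  exact hker r hr

lemma kerBot {n R : ℕ} (X : Matrix (Fin n) (Fin R) ℝ) (hX : X.rank = R) :
    LinearMap.ker X.mulVecLin = ⊥ := by
  have h1 := LinearMap.finrank_range_add_finrank_ker X.mulVecLin
  rw [Matrix.rank] at hX
  have : Module.finrank ℝ (LinearMap.ker X.mulVecLin) = 0 := by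
    have h2 : Module.finrank ℝ (Fin R → ℝ) = R := by simp
    omega
  exact Submodule.finrank_eq_zero.mp this

lemma leftInv {n R : ℕ} (X : Matrix (Fin n) (Fin R) ℝ) (hX : X.rank = R) :
    ∃ G : Matrix (Fin R) (Fin n) ℝ, G * X = 1 := by
  obtain ⟨g, hg⟩ := LinearMap.exists_leftInverse_of_injective X.mulVecLin (kerBot X hX)
  refine ⟨LinearMap.toMatrix' g, ?_⟩
  have : X.mulVecLin = Matrix.toLin' X := rfl
  rw [this] at hg
  calc LinearMap.toMatrix' g * X
      = LinearMap.toMatrix' (g.comp (Matrix.toLin' X)) := by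
        rw [LinearMap.toMatrix'_comp, LinearMap.toMatrix'_toLin']
    _ = 1 := by rw [hg]; simp

lemma col_ne_zero {n R : ℕ} (X : Matrix (Fin n) (Fin R) ℝ) (hX : X.rank = R) (r : Fin R) :
    (fun x => X x r) ≠ 0 := by
  have hinj : Function.Injective X.mulVecLin := by
    rw [← LinearMap.ker_eq_bot]; exact kerBot X hX
  intro h
  have h1 : X.mulVecLin (Pi.single r 1) = 0 := by
    funext x
    have := congrFun h x
    simp only [Pi.zero_apply] at this ⊢
    simp [Matrix.mulVecLin_apply, Matrix.mulVec, dotProduct, Pi.single_apply,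
      mul_ite, mul_one, mul_zero, this]
  have := hinj (by simpa using h1 : X.mulVecLin (Pi.single r 1) = X.mulVecLin 0)
  have := congrFun this r
  simp at this

lemma contract {N n : ℕ} (ρ : ℕ) (b : Fin ρ → Fin N → Fin n → ℝ) (g : Fin N → Fin n → ℝ) :
    ∑ t : Fin N → Fin n, (∑ r, ∏ i, b r i (t i)) * ∏ i, g i (t i)
      = ∑ r, ∏ i, ∑ x, b r i x * g i x := by
  simp_rw [Finset.sum_mul, ← Finset.prod_mul_distrib]
  rw [Finset.sum_comm]
  congr 1
  funext r
  exact (Fintype.prod_sum fun i x => b r i x * g i x).symm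

/-- if X_1,…,X_N ∈ ℝ^{n×R} all have full column rank R (N ≥ 2), then the
tensor T = Σ_{r=1}^R a_{r1}∘⋯∘a_{rN} (a_{ri} the r-th column of X_i) has tensor rank
exactly R: R is the least R' such that T is a sum of R' outer products. -/
theorem tensor_rank_of_full_rank_factors (N n R : ℕ) (hN : 2 ≤ N) (hnR : R ≤ n)
    (X : Fin N → Matrix (Fin n) (Fin R) ℝ) (hX : ∀ i, (X i).rank = R) :
    IsLeast {R' : ℕ | ∃ a : Fin R' → (i : Fin N) → Fin n → ℝ,
      (fun t : Fin N → Fin n => ∑ r : Fin R, ∏ i, X i (t i) r)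
        = fun t => ∑ r', ∏ i, a r' i (t i)} R := by
  constructor
  · exact ⟨fun r i x => X i x r, rfl⟩
  · rintro R' ⟨a, ha⟩
    -- choose contraction weights with nonzero dot products with every column
    have hw : ∀ i : Fin N, ∃ w : Fin n → ℝ, ∀ r, ∑ x, X i x r * w x ≠ 0 := fun i =>
      exists_w (fun r x => X i x r) (fun r => col_ne_zero (X i) (hX i) r)
    choose w hwn using hw
    set i0 : Fin N := ⟨0, by omega⟩ with hi0
    set i1 : Fin N := ⟨1, by omega⟩ with hi1
    have h01 : i1 ≠ i0 := by simp [hi0, hi1, Fin.ext_iff]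
    -- contraction weight functions: delta at u in mode i0, delta at v in mode i1, w elsewhere
    set g : Fin n → Fin n → Fin N → Fin n → ℝ := fun u v i x =>
      if i = i0 then (if x = u then 1 else 0)
      else if i = i1 then (if x = v then 1 else 0) else w i x with hg
    set M : Matrix (Fin n) (Fin n) ℝ := fun u v =>
      ∑ t : Fin N → Fin n, (∑ r, ∏ i, X i (t i) r) * ∏ i, g u v i (t i) with hM
    -- helper to split a product over Fin N at i0, i1
    have split : ∀ (f : Fin N → ℝ), ∏ i, f i
        = f i0 * (f i1 * ∏ i ∈ (Finset.univ.erase i0).erase i1, f i) := by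
      intro f
      rw [← Finset.mul_prod_erase Finset.univ f (Finset.mem_univ i0),
        ← Finset.mul_prod_erase _ f (Finset.mem_erase.mpr ⟨h01, Finset.mem_univ i1⟩)]
    -- the per-mode contracted values
    have key : ∀ (ρ : ℕ) (b : Fin ρ → Fin N → Fin n → ℝ) (u v : Fin n),
        ∑ t : Fin N → Fin n, (∑ r, ∏ i, b r i (t i)) * ∏ i, g u v i (t i)
          = ∑ r, b r i0 u * (b r i1 v *
              ∏ i ∈ (Finset.univ.erase i0).erase i1, ∑ x, b r i x * w i x) := by
      intro ρ b u v
      rw [contract]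
      congr 1
      funext r
      rw [split (fun i => ∑ x, b r i x * g u v i x)]
      have e0 : ∑ x, b r i0 x * g u v i0 x = b r i0 u := by
        simp [hg, mul_ite]
      have e1 : ∑ x, b r i1 x * g u v i1 x = b r i1 v := by
        simp [hg, h01, mul_ite]
      rw [e0, e1]
      congr 1
      congr 1
      apply Finset.prod_congr rfl
      intro i hi
      simp only [Finset.mem_erase] at hi
      simp [hg, hi.1, hi.2.1]
    -- coefficients
    set c : Fin R → ℝ := fun r =>
      ∏ i ∈ (Finset.univ.erase i0).erase i1, ∑ x, X i x r * w i x with hc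
    have hcne : ∀ r, c r ≠ 0 := by
      intro r
      exact Finset.prod_ne_zero_iff.mpr fun i _ => hwn i r
    -- M as a matrix product from the true decomposition
    have hM1 : M = X i0 * Matrix.diagonal c * (X i1)ᵀ := by
      funext u v
      rw [hM]
      simp only
      rw [key R (fun r i x => X i x r) u v]
      rw [Matrix.mul_apply]
      apply Finset.sum_congr rfl
      intro r _
      rw [Matrix.mul_diagonal]
      simp [hc, Matrix.transpose_apply]
      ring
    -- M as a matrix product from the alternative decomposition
    set A' : Matrix (Fin n) (Fin R') ℝ := fun u r' => a r' i0 u with hA'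
    set B' : Matrix (Fin n) (Fin R') ℝ := fun v r' =>
      a r' i1 v * ∏ i ∈ (Finset.univ.erase i0).erase i1, ∑ x, a r' i x * w i x with hB'
    have hM2 : M = A' * B'ᵀ := by
      funext u v
      rw [hM]
      simp only
      have ha' : ∀ t : Fin N → Fin n, ∑ r, ∏ i, X i (t i) r = ∑ r', ∏ i, a r' i (t i) :=
        fun t => congrFun ha t
      simp only [ha']
      rw [key R' a u v, Matrix.mul_apply]
      apply Finset.sum_congr rfl
      intro r' _
      simp [hA', hB', Matrix.transpose_apply, Matrix.transpose]
    -- rank bounds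
    obtain ⟨G0, hG0⟩ := leftInv (X i0) (hX i0)
    obtain ⟨G1, hG1⟩ := leftInv (X i1) (hX i1)
    have hD : G0 * M * G1ᵀ = Matrix.diagonal c := by
      rw [hM1]
      calc G0 * (X i0 * Matrix.diagonal c * (X i1)ᵀ) * G1ᵀ
          = (G0 * X i0) * Matrix.diagonal c * ((X i1)ᵀ * G1ᵀ) := by
            simp only [Matrix.mul_assoc]
        _ = Matrix.diagonal c := by
            rw [hG0, ← Matrix.transpose_mul, hG1]
            simp
    have hDunit : IsUnit (Matrix.diagonal c) := by
      refine isUnit_iff_exists.mpr ⟨Matrix.diagonal (fun r => (c r)⁻¹), ?_, ?_⟩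
      · rw [Matrix.diagonal_mul_diagonal]
        convert Matrix.diagonal_one
        exact mul_inv_cancel₀ (hcne _)
      · rw [Matrix.diagonal_mul_diagonal]
        convert Matrix.diagonal_one
        exact inv_mul_cancel₀ (hcne _)
    have hrD : (Matrix.diagonal c).rank = R := by
      rw [Matrix.rank_of_isUnit _ hDunit, Fintype.card_fin]
    have h1 : R ≤ M.rank := by
      calc R = (G0 * M * G1ᵀ).rank := by rw [hD, hrD]
        _ ≤ (G0 * M).rank := Matrix.rank_mul_le_left _ _
        _ ≤ M.rank := Matrix.rank_mul_le_right _ _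
    have h2 : M.rank ≤ R' := by
      calc M.rank = (A' * B'ᵀ).rank := by rw [hM2]
        _ ≤ A'.rank := Matrix.rank_mul_le_left _ _
        _ ≤ Fintype.card (Fin R') := A'.rank_le_card_width
        _ = R' := Fintype.card_fin _
    omega
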